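/- Let μ be a Lévy measure on ℝ, ψ^L(ξ) = ∫_{|ξu|<1} (ξu)² μ(du) and ψ^U(ξ) = ∫ min((ξu)²,1) μ(du). Then for any 0 < ξ₁ < ξ₂: ψ^U(ξ₂) − ψ^U(ξ₁) = ∫_{ξ₁}^{ξ₂} (2/η)·ψ^L(η) dη. -/

import Mathlib

open MeasureTheory Real Set
open scoped ENNReal


/-- A Lévy measure on `ℝ`: a Borel measure with `∫ min(1, u²) μ(du) < ∞`. -/
def IsLevyMeasure (μ : Measure ℝ) : Prop :=
  ∫⁻ u, ENNReal.ofReal (min 1 (u ^ 2)) ∂μ < ⊤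

/-- `ψ^L(ξ) = ∫_{|ξu|<1} (ξu)² μ(du)`. -/
noncomputable def psiL (μ : Measure ℝ) (ξ : ℝ) : ℝ :=
  (∫⁻ u in {u : ℝ | |ξ * u| < 1}, ENNReal.ofReal ((ξ * u) ^ 2) ∂μ).toReal

/-- `ψ^U(ξ) = ∫ min((ξu)², 1) μ(du)`. -/
noncomputable def psiU (μ : Measure ℝ) (ξ : ℝ) : ℝ :=
  (∫⁻ u, ENNReal.ofReal (min ((ξ * u) ^ 2) 1) ∂μ).toReal

/-- `Re ψ(ξ) = ∫ (1 - cos(ξu)) μ(du)`. -/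
noncomputable def rePsi (μ : Measure ℝ) (ξ : ℝ) : ℝ :=
  (∫⁻ u, ENNReal.ofReal (1 - Real.cos (ξ * u)) ∂μ).toReal

/-- `ρ_t = inf{ξ > 0 : Re ψ(ξ) ≥ 1/t}`. -/
noncomputable def rho (μ : Measure ℝ) (t : ℝ) : ℝ :=
  sInf {ξ : ℝ | 0 < ξ ∧ 1 / t ≤ rePsi μ ξ}


namespace LevyAux


noncomputable def fint (u η : ℝ) : ℝ := if (η * u) ^ 2 < 1 then 2 * η * u ^ 2 else 0

lemma fint_eq_indicator (u : ℝ) :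
    fint u = Set.indicator {η : ℝ | (η * u) ^ 2 < 1} (fun η => 2 * η * u ^ 2) := by
  funext η
  simp [fint, Set.indicator_apply, Set.mem_setOf_eq]

lemma measurableSet_cond (u : ℝ) : MeasurableSet {η : ℝ | (η * u) ^ 2 < 1} :=
  measurableSet_lt (by fun_prop) measurable_const

lemma fint_intervalIntegrable (u a b : ℝ) : IntervalIntegrable (fint u) volume a b := by
  rw [fint_eq_indicator, intervalIntegrable_iff]
  have hc : Continuous (fun η : ℝ => 2 * η * u ^ 2) := by fun_prop
  exact (hc.integrableOn_uIoc).indicator (measurableSet_cond u)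

lemma fint_case_le {u ξ₁ ξ₂ : ℝ} (h0 : 0 ≤ ξ₁) (h12 : ξ₁ ≤ ξ₂) (hle : ξ₂ * |u| ≤ 1) :
    ∫ η in ξ₁..ξ₂, fint u η = u ^ 2 * (ξ₂ ^ 2 - ξ₁ ^ 2) := by
  have hcong : ∫ η in ξ₁..ξ₂, fint u η = ∫ η in ξ₁..ξ₂, (2 * u ^ 2) * η := by
    apply intervalIntegral.integral_congr_ae
    have hne : ∀ᵐ η : ℝ, η ≠ ξ₂ := by
      refine compl_mem_ae_iff.mpr ?_
      exact measure_mono_null (fun x hx => hx) (measure_singleton ξ₂)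
    filter_upwards [hne] with η hη hmem
    rw [Set.uIoc_of_le h12] at hmem
    have hη2 : η < ξ₂ := lt_of_le_of_ne hmem.2 hη
    have hη0 : 0 < η := lt_of_le_of_lt h0 hmem.1
    have habs : η * |u| < 1 := by
      rcases eq_or_ne u 0 with h | h
      · simp [h]
      · have : 0 < |u| := abs_pos.mpr h
        nlinarith
    have hsq : (η * u) ^ 2 < 1 := by
      have h1 : (η * u) ^ 2 = (η * |u|) ^ 2 := by
        rw [mul_pow, mul_pow, sq_abs]
      rw [h1]
      nlinarith [mul_nonneg hη0.le (abs_nonneg u)]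
    simp [fint, hsq]; ring
  rw [hcong, intervalIntegral.integral_const_mul, integral_id]
  ring

lemma fint_case_ge {u ξ₁ ξ₂ : ℝ} (h12 : ξ₁ ≤ ξ₂) (hge : 1 ≤ ξ₁ * |u|) :
    ∫ η in ξ₁..ξ₂, fint u η = 0 := by
  have hcong : ∫ η in ξ₁..ξ₂, fint u η = ∫ η in ξ₁..ξ₂, (0 : ℝ) := by
    apply intervalIntegral.integral_congr
    intro η hmem
    rw [Set.uIcc_of_le h12] at hmem
    have hu : 0 < |u| := by
      by_contra h
      push_neg at h
      have h0 : |u| = 0 := le_antisymm h (abs_nonneg u)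
      rw [h0, mul_zero] at hge; linarith
    have h1 : 1 ≤ η * |u| := le_trans hge (by nlinarith [hmem.1])
    have hsq : ¬ (η * u) ^ 2 < 1 := by
      push_neg
      have : (η * u) ^ 2 = (η * |u|) ^ 2 := by rw [mul_pow, mul_pow, sq_abs]
      rw [this]; nlinarith
    simp [fint, hsq]
  rw [hcong]; simp

lemma fint_key {u : ℝ} {ξ₁ ξ₂ : ℝ} (h1 : 0 < ξ₁) (h2 : ξ₁ ≤ ξ₂) :
    ∫ η in ξ₁..ξ₂, fint u η = min ((ξ₂ * u) ^ 2) 1 - min ((ξ₁ * u) ^ 2) 1 := by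
  have habs : ∀ ξ : ℝ, (ξ * u) ^ 2 = (ξ * |u|) ^ 2 := fun ξ => by
    rw [mul_pow, mul_pow, sq_abs]
  rcases le_or_gt (ξ₂ * |u|) 1 with hA | hA
  · rw [fint_case_le h1.le h2 hA]
    have h2' : (ξ₂ * u) ^ 2 ≤ 1 := by
      rw [habs]; nlinarith [mul_nonneg (h1.le.trans h2) (abs_nonneg u)]
    have h1' : (ξ₁ * u) ^ 2 ≤ 1 := by
      rw [habs]
      nlinarith [mul_nonneg h1.le (abs_nonneg u),
        mul_le_mul_of_nonneg_right h2 (abs_nonneg u)]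
    rw [min_eq_left h2', min_eq_left h1']
    ring
  · rcases le_or_gt 1 (ξ₁ * |u|) with hB | hB
    · rw [fint_case_ge h2 hB]
      have h2' : 1 ≤ (ξ₂ * u) ^ 2 := by
        rw [habs]; nlinarith [abs_nonneg u]
      have h1' : 1 ≤ (ξ₁ * u) ^ 2 := by rw [habs]; nlinarith
      rw [min_eq_right h2', min_eq_right h1']
      ring
    · -- ξ₁ < a < ξ₂ where a = 1/|u|
      have hu : 0 < |u| := by
        by_contra h
        push_neg at h
        have h0 : |u| = 0 := le_antisymm h (abs_nonneg u)
        rw [h0, mul_zero] at hA; linarith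
      set a : ℝ := 1 / |u| with ha
      have ha0 : 0 < a := by positivity
      have hau : a * |u| = 1 := by rw [ha]; field_simp
      have h1a : ξ₁ < a := by
        rw [ha, lt_div_iff₀ hu]; linarith
      have ha2 : a < ξ₂ := by
        rw [ha, div_lt_iff₀ hu]; linarith
      have hsplit : (∫ η in ξ₁..a, fint u η) + ∫ η in a..ξ₂, fint u η
          = ∫ η in ξ₁..ξ₂, fint u η :=
        intervalIntegral.integral_add_adjacent_intervals
          (fint_intervalIntegrable u ξ₁ a) (fint_intervalIntegrable u a ξ₂)
      rw [← hsplit, fint_case_le h1.le h1a.le hau.le, fint_case_ge ha2.le hau.ge]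
      have h2' : 1 ≤ (ξ₂ * u) ^ 2 := by
        rw [habs]; nlinarith
      have h1' : (ξ₁ * u) ^ 2 ≤ 1 := by
        rw [habs]; nlinarith [mul_nonneg h1.le (abs_nonneg u)]
      rw [min_eq_right h2', min_eq_left h1']
      have hua : u ^ 2 * a ^ 2 = 1 := by
        have : (a * |u|) ^ 2 = 1 := by rw [hau]; norm_num
        nlinarith [sq_abs u]
      nlinarith



noncomputable def UU (ν : Measure ℝ) (ξ : ℝ) : ℝ≥0∞ :=
  ∫⁻ u, ENNReal.ofReal (min ((ξ * u) ^ 2) 1) ∂ν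

noncomputable def LL (ν : Measure ℝ) (η : ℝ) : ℝ≥0∞ :=
  ∫⁻ u, Set.indicator {u : ℝ | (η * u) ^ 2 < 1}
    (fun u => ENNReal.ofReal ((η * u) ^ 2)) u ∂ν

lemma measurableSet_cond' (η : ℝ) : MeasurableSet {u : ℝ | (η * u) ^ 2 < 1} :=
  measurableSet_lt (by fun_prop) measurable_const

lemma min_le_aux (ξ u : ℝ) : min ((ξ * u) ^ 2) 1 ≤ max (ξ ^ 2) 1 * min 1 (u ^ 2) := by
  rcases le_total (u ^ 2) 1 with h | h
  · rw [min_eq_right h]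
    calc min ((ξ * u) ^ 2) 1 ≤ (ξ * u) ^ 2 := min_le_left _ _
      _ = ξ ^ 2 * u ^ 2 := by ring
      _ ≤ max (ξ ^ 2) 1 * u ^ 2 := by nlinarith [le_max_left (ξ ^ 2) 1, sq_nonneg u]
  · rw [min_eq_left h]
    calc min ((ξ * u) ^ 2) 1 ≤ 1 := min_le_right _ _
      _ ≤ max (ξ ^ 2) 1 * 1 := by nlinarith [le_max_right (ξ ^ 2) 1]

lemma UU_lt_top {ν : Measure ℝ} (hν : ∫⁻ u, ENNReal.ofReal (min 1 (u ^ 2)) ∂ν < ⊤)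
    (ξ : ℝ) : UU ν ξ < ⊤ := by
  have hb : UU ν ξ ≤ ENNReal.ofReal (max (ξ ^ 2) 1) * ∫⁻ u, ENNReal.ofReal (min 1 (u ^ 2)) ∂ν := by
    rw [← lintegral_const_mul _ (by fun_prop)]
    apply lintegral_mono
    intro u
    dsimp only
    rw [← ENNReal.ofReal_mul (by positivity)]
    exact ENNReal.ofReal_le_ofReal (min_le_aux ξ u)
  exact lt_of_le_of_lt hb (ENNReal.mul_lt_top ENNReal.ofReal_lt_top hν)

lemma LL_le_UU (ν : Measure ℝ) (η : ℝ) : LL ν η ≤ UU ν η := by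
  apply lintegral_mono
  intro u
  dsimp only
  by_cases h : (η * u) ^ 2 < 1
  · rw [Set.indicator_of_mem (show u ∈ {u : ℝ | (η * u) ^ 2 < 1} from h)]
    exact ENNReal.ofReal_le_ofReal (le_min le_rfl h.le)
  · rw [Set.indicator_of_notMem (show u ∉ {u : ℝ | (η * u) ^ 2 < 1} from h)]
    exact zero_le

lemma lintegral_nu (μ : Measure ℝ) (f : ℝ → ℝ≥0∞) (hf : f 0 = 0) :
    ∫⁻ u, f u ∂(μ.restrict {(0:ℝ)}ᶜ) = ∫⁻ u, f u ∂μ := by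
  conv_rhs => rw [← Measure.restrict_compl_add_restrict (μ := μ) (measurableSet_singleton (0:ℝ))]
  rw [lintegral_add_measure]
  have h0 : (∫⁻ u, f u ∂(μ.restrict {(0:ℝ)})) = f 0 * μ {0} := lintegral_singleton f 0
  rw [h0, hf, zero_mul, add_zero]

lemma measure_abs_gt_lt_top {μ : Measure ℝ}
    (hμ : ∫⁻ u, ENNReal.ofReal (min 1 (u ^ 2)) ∂μ < ⊤) {ε : ℝ} (hε : 0 < ε) (hε1 : ε ≤ 1) :
    μ {u : ℝ | ε < |u|} < ⊤ := by
  set S := {u : ℝ | ε < |u|} with hS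
  have hSm : MeasurableSet S := measurableSet_lt measurable_const (by fun_prop)
  have hne0 : ENNReal.ofReal (ε ^ 2) ≠ 0 := (ENNReal.ofReal_pos.mpr (by positivity)).ne'
  have hb : ENNReal.ofReal (ε ^ 2) * μ S ≤ ∫⁻ u, ENNReal.ofReal (min 1 (u ^ 2)) ∂μ := by
    rw [← setLIntegral_const S (ENNReal.ofReal (ε ^ 2))]
    calc ∫⁻ _ in S, ENNReal.ofReal (ε ^ 2) ∂μ
        ≤ ∫⁻ u in S, ENNReal.ofReal (min 1 (u ^ 2)) ∂μ := by
          apply setLIntegral_mono (by fun_prop)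
          intro u hu
          apply ENNReal.ofReal_le_ofReal
          have h1 : ε < |u| := hu
          have : ε ^ 2 ≤ u ^ 2 := by nlinarith [sq_abs u, abs_nonneg u]
          exact le_min (by nlinarith) (by nlinarith)
      _ ≤ _ := setLIntegral_le_lintegral _ _
  have h2 : μ S ≤ (∫⁻ u, ENNReal.ofReal (min 1 (u ^ 2)) ∂μ) / ENNReal.ofReal (ε ^ 2) := by
    rw [ENNReal.le_div_iff_mul_le (Or.inl hne0) (Or.inl ENNReal.ofReal_ne_top)]
    rw [mul_comm]
    exact hb
  exact lt_of_le_of_lt h2 (ENNReal.div_lt_top hμ.ne hne0)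

lemma sigmaFinite_nu {μ : Measure ℝ}
    (hμ : ∫⁻ u, ENNReal.ofReal (min 1 (u ^ 2)) ∂μ < ⊤) :
    SigmaFinite (μ.restrict {(0:ℝ)}ᶜ) := by
  constructor
  refine ⟨⟨fun n => {u : ℝ | 1 / (n + 1) < |u|} ∪ {0}, fun n => mem_univ _, fun n => ?_, ?_⟩⟩
  · have hm : MeasurableSet ({u : ℝ | 1 / ((n:ℝ) + 1) < |u|} ∪ {0}) :=
      (measurableSet_lt measurable_const (by fun_prop)).union (measurableSet_singleton 0)
    rw [Measure.restrict_apply hm]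
    have hsub : ({u : ℝ | 1 / ((n:ℝ) + 1) < |u|} ∪ {0}) ∩ {(0:ℝ)}ᶜ
        ⊆ {u : ℝ | 1 / ((n:ℝ) + 1) < |u|} := by
      rintro u ⟨hu, hu0⟩
      rcases hu with h | h
      · exact h
      · exact absurd h hu0
    refine lt_of_le_of_lt (measure_mono hsub) ?_
    exact measure_abs_gt_lt_top hμ (by positivity)
      (by rw [div_le_one (by positivity)]; linarith [Nat.cast_nonneg (α := ℝ) n])
  · ext u
    simp only [mem_iUnion, mem_univ, iff_true, mem_union, mem_setOf_eq, mem_singleton_iff]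
    rcases eq_or_ne u 0 with h | h
    · exact ⟨0, Or.inr h⟩
    · have hu : 0 < |u| := abs_pos.mpr h
      obtain ⟨n, hn⟩ := exists_nat_gt (1 / |u|)
      refine ⟨n, Or.inl ?_⟩
      rw [div_lt_iff₀ (by positivity)]
      rw [div_lt_iff₀ hu] at hn
      nlinarith


end LevyAux

theorem psiU_sub_eq_integral_psiL (μ : Measure ℝ) (hμ : IsLevyMeasure μ)
    (ξ₁ ξ₂ : ℝ) (h₁ : 0 < ξ₁) (h₂ : ξ₁ < ξ₂) :
    psiU μ ξ₂ - psiU μ ξ₁ = ∫ η in ξ₁..ξ₂, (2 / η) * psiL μ η := by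
  classical
  set ν : Measure ℝ := μ.restrict {(0:ℝ)}ᶜ with hνdef
  have hν_levy : ∫⁻ u, ENNReal.ofReal (min 1 (u ^ 2)) ∂ν < ⊤ := by
    rw [hνdef, LevyAux.lintegral_nu μ _ (by simp)]
    exact hμ
  haveI hsf : SigmaFinite ν := LevyAux.sigmaFinite_nu hμ
  have hUtop : ∀ ξ, LevyAux.UU ν ξ ≠ ⊤ := fun ξ => (LevyAux.UU_lt_top hν_levy ξ).ne
  have hLtop : ∀ η, LevyAux.LL ν η ≠ ⊤ :=
    fun η => (lt_of_le_of_lt (LevyAux.LL_le_UU ν η) (LevyAux.UU_lt_top hν_levy η)).ne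
  have hpsiU : ∀ ξ, psiU μ ξ = (LevyAux.UU ν ξ).toReal := by
    intro ξ
    rw [psiU, LevyAux.UU, hνdef, LevyAux.lintegral_nu μ _ (by simp)]
  have hpsiL : ∀ η, psiL μ η = (LevyAux.LL ν η).toReal := by
    intro η
    have hset : {u : ℝ | |η * u| < 1} = {u : ℝ | (η * u) ^ 2 < 1} := by
      ext u; simp [sq_lt_one_iff_abs_lt_one]
    rw [psiL, hset, ← lintegral_indicator (LevyAux.measurableSet_cond' η) _,
      LevyAux.LL, hνdef, LevyAux.lintegral_nu μ _ (by simp)]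
  -- Step 1 : pointwise in u, the η-integral
  have hstep1 : ∀ u : ℝ, (∫⁻ η in Ioc ξ₁ ξ₂, ENNReal.ofReal (LevyAux.fint u η))
      = ENNReal.ofReal (min ((ξ₂ * u) ^ 2) 1) - ENNReal.ofReal (min ((ξ₁ * u) ^ 2) 1) := by
    intro u
    have hInt : IntegrableOn (LevyAux.fint u) (Ioc ξ₁ ξ₂) volume := by
      have h := LevyAux.fint_intervalIntegrable u ξ₁ ξ₂
      rw [intervalIntegrable_iff, uIoc_of_le h₂.le] at h
      exact h
    have hnn : 0 ≤ᵐ[volume.restrict (Ioc ξ₁ ξ₂)] LevyAux.fint u := by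
      filter_upwards [ae_restrict_mem measurableSet_Ioc] with η hη
      have hη0 : 0 < η := h₁.trans hη.1
      unfold LevyAux.fint
      split
      · positivity
      · exact le_rfl
    rw [← ofReal_integral_eq_lintegral_ofReal hInt hnn,
      ← intervalIntegral.integral_of_le h₂.le, LevyAux.fint_key h₁ h₂.le,
      ENNReal.ofReal_sub _ (le_min (by positivity) zero_le_one)]
  -- measurability of the uncurried integrand
  have hGmeas : Measurable (Function.uncurry fun (u η : ℝ) => ENNReal.ofReal (LevyAux.fint u η)) := by
    apply Measurable.ennreal_ofReal
    have heq : (fun p : ℝ × ℝ => LevyAux.fint p.1 p.2)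
        = Set.indicator {p : ℝ × ℝ | (p.2 * p.1) ^ 2 < 1} (fun p => 2 * p.2 * p.1 ^ 2) := by
      funext p
      simp [LevyAux.fint, Set.indicator_apply, Set.mem_setOf_eq]
    show Measurable fun p : ℝ × ℝ => LevyAux.fint p.1 p.2
    rw [heq]
    exact Measurable.indicator (by fun_prop)
      (measurableSet_lt (by fun_prop) measurable_const)
  -- swap
  have hswap : (∫⁻ u, (∫⁻ η in Ioc ξ₁ ξ₂, ENNReal.ofReal (LevyAux.fint u η)) ∂ν)
      = ∫⁻ η in Ioc ξ₁ ξ₂, (∫⁻ u, ENNReal.ofReal (LevyAux.fint u η) ∂ν) :=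
    lintegral_lintegral_swap hGmeas.aemeasurable
  -- evaluate the u-integral of the difference
  have hUle : LevyAux.UU ν ξ₁ ≤ LevyAux.UU ν ξ₂ := by
    apply lintegral_mono
    intro u
    apply ENNReal.ofReal_le_ofReal
    apply min_le_min _ le_rfl
    have hsq : ξ₁ ^ 2 ≤ ξ₂ ^ 2 := by nlinarith
    nlinarith [sq_nonneg u, hsq]
  have hsub : (∫⁻ u, (ENNReal.ofReal (min ((ξ₂ * u) ^ 2) 1)
        - ENNReal.ofReal (min ((ξ₁ * u) ^ 2) 1)) ∂ν)
      = LevyAux.UU ν ξ₂ - LevyAux.UU ν ξ₁ := by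
    apply lintegral_sub (by fun_prop) (hUtop ξ₁)
    filter_upwards with u
    apply ENNReal.ofReal_le_ofReal
    apply min_le_min _ le_rfl
    have hsq : ξ₁ ^ 2 ≤ ξ₂ ^ 2 := by nlinarith
    nlinarith [sq_nonneg u, hsq]
  -- inner u-integral for fixed η ∈ Ioc ξ₁ ξ₂
  have hinner : ∀ η ∈ Ioc ξ₁ ξ₂, (∫⁻ u, ENNReal.ofReal (LevyAux.fint u η) ∂ν)
      = ENNReal.ofReal (2 / η) * LevyAux.LL ν η := by
    intro η hη
    have hη0 : 0 < η := h₁.trans hη.1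
    have hpt : ∀ u : ℝ, ENNReal.ofReal (LevyAux.fint u η)
        = ENNReal.ofReal (2 / η) * Set.indicator {u : ℝ | (η * u) ^ 2 < 1}
            (fun u => ENNReal.ofReal ((η * u) ^ 2)) u := by
      intro u
      by_cases h : (η * u) ^ 2 < 1
      · rw [Set.indicator_of_mem (show u ∈ {u : ℝ | (η * u) ^ 2 < 1} from h),
          ← ENNReal.ofReal_mul (by positivity)]
        congr 1
        unfold LevyAux.fint
        rw [if_pos h]
        field_simp
      · rw [Set.indicator_of_notMem (show u ∉ {u : ℝ | (η * u) ^ 2 < 1} from h)]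
        unfold LevyAux.fint
        rw [if_neg h]
        simp
    simp_rw [hpt]
    rw [lintegral_const_mul _ (Measurable.indicator (by fun_prop)
      (LevyAux.measurableSet_cond' η))]
    rfl
  -- measurability of LL
  have hLmeas : Measurable (LevyAux.LL ν) := by
    apply Measurable.lintegral_prod_right
    have heq : (Function.uncurry fun (η u : ℝ) => Set.indicator {u : ℝ | (η * u) ^ 2 < 1}
        (fun u => ENNReal.ofReal ((η * u) ^ 2)) u)
        = Set.indicator {p : ℝ × ℝ | (p.1 * p.2) ^ 2 < 1}
            (fun p => ENNReal.ofReal ((p.1 * p.2) ^ 2)) := by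
      funext p
      simp [Function.uncurry, Set.indicator_apply, Set.mem_setOf_eq]
    rw [heq]
    exact Measurable.indicator (by fun_prop)
      (measurableSet_lt (by fun_prop) measurable_const)
  -- RHS as a lintegral
  have hRHS : (∫ η in ξ₁..ξ₂, (2 / η) * psiL μ η)
      = (∫⁻ η in Ioc ξ₁ ξ₂, ENNReal.ofReal (2 / η) * LevyAux.LL ν η).toReal := by
    rw [intervalIntegral.integral_of_le h₂.le]
    have hmeasf : AEStronglyMeasurable (fun η => (2 / η) * psiL μ η)
        (volume.restrict (Ioc ξ₁ ξ₂)) := by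
      have heq : (fun η => (2 / η) * psiL μ η)
          = fun η => (2 / η) * (LevyAux.LL ν η).toReal :=
        funext fun η => by rw [hpsiL η]
      rw [heq]
      exact ((measurable_const.div measurable_id).mul
        hLmeas.ennreal_toReal).aestronglyMeasurable
    have hnn : 0 ≤ᵐ[volume.restrict (Ioc ξ₁ ξ₂)] fun η => (2 / η) * psiL μ η := by
      filter_upwards [ae_restrict_mem measurableSet_Ioc] with η hη
      have hη0 : 0 < η := h₁.trans hη.1
      have hL0 : 0 ≤ psiL μ η := by rw [psiL]; exact ENNReal.toReal_nonneg
      positivity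
    rw [integral_eq_lintegral_of_nonneg_ae hnn hmeasf]
    congr 1
    apply setLIntegral_congr_fun measurableSet_Ioc
    intro η hη
    have hη0 : 0 < η := h₁.trans hη.1
    dsimp only
    rw [hpsiL η, ENNReal.ofReal_mul (by positivity), ENNReal.ofReal_toReal (hLtop η)]
  -- conclude
  rw [hpsiU ξ₂, hpsiU ξ₁, hRHS,
    ← ENNReal.toReal_sub_of_le hUle (hUtop ξ₂)]
  congr 1
  symm
  calc ∫⁻ η in Ioc ξ₁ ξ₂, ENNReal.ofReal (2 / η) * LevyAux.LL ν η
      = ∫⁻ η in Ioc ξ₁ ξ₂, (∫⁻ u, ENNReal.ofReal (LevyAux.fint u η) ∂ν) := by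
        symm
        apply setLIntegral_congr_fun measurableSet_Ioc
        intro η hη
        exact hinner η hη
    _ = ∫⁻ u, (∫⁻ η in Ioc ξ₁ ξ₂, ENNReal.ofReal (LevyAux.fint u η)) ∂ν := hswap.symm
    _ = ∫⁻ u, (ENNReal.ofReal (min ((ξ₂ * u) ^ 2) 1)
          - ENNReal.ofReal (min ((ξ₁ * u) ^ 2) 1)) ∂ν := lintegral_congr hstep1
    _ = LevyAux.UU ν ξ₂ - LevyAux.UU ν ξ₁ := hsub
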